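/- Let f(x) = N₀(2^{x/W} − 1) with N₀, W > 0. For any r > 0 and D ≥ 0, the energy (D/r)·f(r)/h² of transmitting D bits at constant rate r equals t·f(D/t)/h² with t = D/r, and for fixed total time budget shared between two data chunks D₁ and D₂ transmitted at rates r₁ and r₂ over the same channel, the total energy D₁f(r₁)/(r₁h²) + D₂f(r₂)/(r₂h²) subject to D₁/r₁ + D₂/r₂ = t₀ (fixed) and transmitting D₁ + D₂ bits total is minimized when r₁ = r₂. -/

import Mathlib

/-- With f(x) = N₀(2^{x/B} − 1): (i) the energy (D/r)·f(r)/h² of sending D bits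
at rate r equals t·f(D/t)/h² with t = D/r; (ii) for two chunks D₁, D₂ sent at
rates r₁, r₂ over the same channel under a total time budget
D₁/r₁ + D₂/r₂ = t₀, the total energy is minimized when r₁ = r₂
(= (D₁+D₂)/t₀). -/
theorem stmt_8 (N₀ B h : ℝ) (hN : 0 < N₀) (hB : 0 < B) (hh : 0 < h)
    (f : ℝ → ℝ) (hf : ∀ x : ℝ, f x = N₀ * ((2 : ℝ) ^ (x / B) - 1)) :
    (∀ D r : ℝ, 0 ≤ D → 0 < r →
      (D / r) * f r / h ^ 2 = (D / r) * f (D / (D / r)) / h ^ 2) ∧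
    (∀ D₁ D₂ t₀ r₁ r₂ : ℝ, 0 < D₁ → 0 < D₂ → 0 < t₀ → 0 < r₁ → 0 < r₂ →
      D₁ / r₁ + D₂ / r₂ = t₀ →
      D₁ * f ((D₁ + D₂) / t₀) / (((D₁ + D₂) / t₀) * h ^ 2) +
        D₂ * f ((D₁ + D₂) / t₀) / (((D₁ + D₂) / t₀) * h ^ 2) ≤
      D₁ * f r₁ / (r₁ * h ^ 2) + D₂ * f r₂ / (r₂ * h ^ 2)) := by
  have hfe : ∀ x : ℝ, f x = N₀ * (Real.exp (Real.log 2 * (x / B)) - 1) := by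
    intro x
    rw [hf x, Real.rpow_def_of_pos (by norm_num : (0:ℝ) < 2)]
  constructor
  · intro D r hD hr
    rcases eq_or_lt_of_le hD with hD0 | hD0
    · simp [← hD0]
    · have hDr : D / (D / r) = r := by
        field_simp
      rw [hDr]
  · intro D₁ D₂ t₀ r₁ r₂ hD₁ hD₂ ht₀ hr₁ hr₂ htime
    set t₁ := D₁ / r₁ with ht₁def
    set t₂ := D₂ / r₂ with ht₂def
    have ht₁ : 0 < t₁ := div_pos hD₁ hr₁
    have ht₂ : 0 < t₂ := div_pos hD₂ hr₂
    have hD₁e : D₁ = t₁ * r₁ := by rw [ht₁def, div_mul_cancel₀ _ (ne_of_gt hr₁)]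
    have hD₂e : D₂ = t₂ * r₂ := by rw [ht₂def, div_mul_cancel₀ _ (ne_of_gt hr₂)]
    set R := (D₁ + D₂) / t₀ with hRdef
    have hR : 0 < R := div_pos (by linarith) ht₀
    have hRe : t₀ * R = t₁ * r₁ + t₂ * r₂ := by
      rw [hRdef]; field_simp; linarith [hD₁e, hD₂e]
    have hjen : t₀ * Real.exp (Real.log 2 * (R / B)) ≤
        t₁ * Real.exp (Real.log 2 * (r₁ / B)) + t₂ * Real.exp (Real.log 2 * (r₂ / B)) := by
      have hconv := convexOn_exp.2 (Set.mem_univ (Real.log 2 * (r₁ / B)))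
        (Set.mem_univ (Real.log 2 * (r₂ / B))) (le_of_lt (div_pos ht₁ ht₀))
        (le_of_lt (div_pos ht₂ ht₀)) (by field_simp; linarith)
      have harg : (t₁/t₀) • (Real.log 2 * (r₁ / B)) + (t₂/t₀) • (Real.log 2 * (r₂ / B))
          = Real.log 2 * (R / B) := by
        have hR' : R = (t₁ * r₁ + t₂ * r₂) / t₀ := by
          rw [eq_div_iff (ne_of_gt ht₀)]; linarith [hRe]
        rw [hR']
        simp only [smul_eq_mul]
        field_simp
      rw [harg] at hconv
      have hmul := mul_le_mul_of_nonneg_left hconv (le_of_lt ht₀)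
      simp only [smul_eq_mul] at hmul
      calc t₀ * Real.exp (Real.log 2 * (R / B)) ≤
          t₀ * (t₁ / t₀ * Real.exp (Real.log 2 * (r₁ / B)) +
            t₂ / t₀ * Real.exp (Real.log 2 * (r₂ / B))) := hmul
        _ = t₁ * Real.exp (Real.log 2 * (r₁ / B)) + t₂ * Real.exp (Real.log 2 * (r₂ / B)) := by
          field_simp
    have key : t₀ * f R ≤ t₁ * f r₁ + t₂ * f r₂ := by
      rw [hfe R, hfe r₁, hfe r₂]
      have ht₀e : t₁ + t₂ = t₀ := htime
      nlinarith [hjen]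
    have h2 : (0:ℝ) < h ^ 2 := by positivity
    have lhs_eq : D₁ * f R / (R * h ^ 2) + D₂ * f R / (R * h ^ 2) = t₀ * f R / h ^ 2 := by
      have h3 : D₁ + D₂ = t₀ * R := by rw [hRdef]; field_simp
      rw [← add_div, ← add_mul, h3]
      field_simp
    have rhs1 : D₁ * f r₁ / (r₁ * h ^ 2) = t₁ * f r₁ / h ^ 2 := by
      rw [hD₁e]; field_simp
    have rhs2 : D₂ * f r₂ / (r₂ * h ^ 2) = t₂ * f r₂ / h ^ 2 := by
      rw [hD₂e]; field_simp
    rw [lhs_eq, rhs1, rhs2, ← add_div]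
    gcongr
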